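/- Let H0 be symmetric invertible, S, Y be n×(k+1) matrices with S^T Y = L + D + R as usual, and suppose D̄ = D + R is invertible. Then the BFGS-inverse compact representation H = H0 + [S, H0 Y] [[D̄^{-T}(D + Y^T H0 Y) D̄^{-1}, -D̄^{-T}],[-D̄^{-1}, 0]] [S, H0 Y]^T can equivalently be written as H = H0 - [H0 Y, S] [[Y^T H0 Y + D, D̄^T],[D̄, 0]]^{-1} [H0 Y, S]^T, assuming the indicated 2×2 block matrix is invertible. -/

import Mathlib

open Matrix

theorem bfgs_dfp_duality (n k : ℕ)
    (H0 : Matrix (Fin n) (Fin n) ℝ) (hH0sym : H0ᵀ = H0) (hH0 : IsUnit H0.det)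
    (S Y : Matrix (Fin n) (Fin (k + 1)) ℝ)
    (L D R : Matrix (Fin (k + 1)) (Fin (k + 1)) ℝ)
    (hL : ∀ i j, ¬ j < i → L i j = 0)
    (hD : ∀ i j, i ≠ j → D i j = 0)
    (hR : ∀ i j, ¬ i < j → R i j = 0)
    (hdec : Sᵀ * Y = L + D + R)
    (hDbar : IsUnit (D + R).det)
    (hK : IsUnit (fromBlocks (Yᵀ * H0 * Y + D) (D + R)ᵀ (D + R)
            (0 : Matrix (Fin (k + 1)) (Fin (k + 1)) ℝ)).det) :
    let Dbar := D + R
    let Ψ1 := fromCols S (H0 * Y)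
    let Mid : Matrix (Fin (k + 1) ⊕ Fin (k + 1)) (Fin (k + 1) ⊕ Fin (k + 1)) ℝ :=
      fromBlocks ((Dbar⁻¹)ᵀ * (D + Yᵀ * H0 * Y) * Dbar⁻¹) (-(Dbar⁻¹)ᵀ) (-Dbar⁻¹) 0
    let Ψ2 := fromCols (H0 * Y) S
    let K : Matrix (Fin (k + 1) ⊕ Fin (k + 1)) (Fin (k + 1) ⊕ Fin (k + 1)) ℝ :=
      fromBlocks (Yᵀ * H0 * Y + D) Dbarᵀ Dbar 0
    H0 + Ψ1 * Mid * Ψ1ᵀ = H0 - Ψ2 * K⁻¹ * Ψ2ᵀ := by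
  intro Dbar Ψ1 Mid Ψ2 K
  set A := Yᵀ * H0 * Y + D with hA
  have hDbarT : IsUnit Dbarᵀ.det := by rwa [det_transpose]
  have h1 : Dbar * Dbar⁻¹ = 1 := mul_nonsing_inv _ hDbar
  have h2 : Dbarᵀ * (Dbarᵀ)⁻¹ = 1 := mul_nonsing_inv _ hDbarT
  have hKinv : K⁻¹ =
      fromBlocks 0 Dbar⁻¹ ((Dbarᵀ)⁻¹) (-((Dbarᵀ)⁻¹ * A * Dbar⁻¹)) := by
    apply inv_eq_right_inv
    show fromBlocks A Dbarᵀ Dbar 0 * _ = 1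
    rw [fromBlocks_multiply]
    simp only [Matrix.mul_zero, Matrix.zero_mul, Matrix.mul_neg, add_zero, zero_add,
      h1, h2, Matrix.mul_one]
    rw [← Matrix.mul_assoc, ← Matrix.mul_assoc, h2, Matrix.one_mul]
    simp [fromBlocks_one]
  have hT : (Dbar⁻¹)ᵀ = (Dbarᵀ)⁻¹ := transpose_nonsing_inv _
  have hcomm : D + Yᵀ * H0 * Y = A := by rw [hA]; exact add_comm _ _
  rw [hKinv]
  show H0 + fromCols S (H0 * Y) *
      fromBlocks ((Dbar⁻¹)ᵀ * (D + Yᵀ * H0 * Y) * Dbar⁻¹) (-(Dbar⁻¹)ᵀ) (-Dbar⁻¹) 0 *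
      (fromCols S (H0 * Y))ᵀ =
    H0 - fromCols (H0 * Y) S *
      fromBlocks 0 Dbar⁻¹ ((Dbarᵀ)⁻¹) (-((Dbarᵀ)⁻¹ * A * Dbar⁻¹)) *
      (fromCols (H0 * Y) S)ᵀ
  rw [transpose_fromCols, transpose_fromCols, fromCols_mul_fromBlocks,
    fromCols_mul_fromBlocks, fromCols_mul_fromRows, fromCols_mul_fromRows,
    hT, hcomm]
  simp only [Matrix.mul_zero, Matrix.zero_mul, Matrix.mul_neg, Matrix.neg_mul,
    add_zero, zero_add, Matrix.add_mul, Matrix.mul_add]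
  abel_nf
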